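/- If every connected component of the correlation graph associated with a family of r-locally consistent distributions {D_S} has size at most r, then the covariance matrix of {D_S} is positive semidefinite. -/

import Mathlib

open scoped Classical

/-- A family `{D_S}` of distributions over `[q]^S` is `r`-locally consistent if
for all `T ⊆ S` with `|S| ≤ r`, the marginal of `D_S` on `T` equals `D_T`. -/
def LocallyConsistent (n q r : ℕ)
    (D : (S : Finset (Fin n)) → ((↑S : Set (Fin n)) → Fin q) → ℝ) : Prop :=
  ∀ (S T : Finset (Fin n)) (hTS : T ⊆ S), S.card ≤ r → ∀ β,
    D T β = ∑ x : ((↑S : Set (Fin n)) → Fin q),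
      if ∀ i : (↑T : Set (Fin n)), x (Set.inclusion (Finset.coe_subset.mpr hTS) i) = β i then D S x else 0

/-- `D_{{u}}(x_u = a)`. -/
def singleProb {n q : ℕ}
    (D : (S : Finset (Fin n)) → ((↑S : Set (Fin n)) → Fin q) → ℝ)
    (u : Fin n) (a : Fin q) : ℝ :=
  D {u} (fun _ => a)

/-- `D_{{u,v}}(x_u = a ∧ x_v = b)` (with the diagonal convention for `u = v`). -/
noncomputable def pairProb {n q : ℕ}
    (D : (S : Finset (Fin n)) → ((↑S : Set (Fin n)) → Fin q) → ℝ)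
    (u v : Fin n) (a b : Fin q) : ℝ :=
  ∑ x : ((↑({u, v} : Finset (Fin n)) : Set (Fin n)) → Fin q),
    if x ⟨u, Finset.mem_insert_self u {v}⟩ = a ∧
       x ⟨v, Finset.mem_insert_of_mem (Finset.mem_singleton_self v)⟩ = b
    then D {u, v} x else 0

/-- The covariance matrix of the family `{D_S}`. -/
noncomputable def covMatrix {n q : ℕ}
    (D : (S : Finset (Fin n)) → ((↑S : Set (Fin n)) → Fin q) → ℝ) :
    Matrix (Fin n × Fin q) (Fin n × Fin q) ℝ :=
  Matrix.of fun p p' =>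
    pairProb D p.1 p'.1 p.2 p'.2 - singleProb D p.1 p.2 * singleProb D p'.1 p'.2

/-- The correlation graph: `u ~ v` iff `u ≠ v` and some covariance entry
between `u` and `v` is nonzero. -/
noncomputable def corrGraph {n q : ℕ}
    (D : (S : Finset (Fin n)) → ((↑S : Set (Fin n)) → Fin q) → ℝ) :
    SimpleGraph (Fin n) :=
  SimpleGraph.fromRel (fun u v => ∃ a b, covMatrix D (u, a) (v, b) ≠ 0)

section Aux

variable {n q r : ℕ}
  (D : (S : Finset (Fin n)) → ((↑S : Set (Fin n)) → Fin q) → ℝ)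

/-- Marginal of `D_V` on a single coordinate. -/
lemma marg_single (hD : LocallyConsistent n q r D)
    {V : Finset (Fin n)} (hV : V.card ≤ r) {u : Fin n} (hu : u ∈ V) (a : Fin q) :
    singleProb D u a = ∑ x : ((↑V : Set (Fin n)) → Fin q),
      if x ⟨u, hu⟩ = a then D V x else 0 := by
  have hTS : ({u} : Finset (Fin n)) ⊆ V := Finset.singleton_subset_iff.mpr hu
  rw [singleProb, hD V {u} hTS hV (fun _ => a)]
  apply Finset.sum_congr rfl
  intro x _
  congr 1
  apply propext
  constructor
  · intro h
    exact h ⟨u, by simp⟩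
  · rintro h ⟨i, hi⟩
    simp only [Finset.coe_singleton, Set.mem_singleton_iff] at hi
    subst hi
    exact h

/-- Marginal of `D_V` on a pair of coordinates. -/
lemma marg_pair (hD : LocallyConsistent n q r D)
    {V : Finset (Fin n)} (hV : V.card ≤ r) {u v : Fin n} (hu : u ∈ V) (hv : v ∈ V) (a b : Fin q) :
    pairProb D u v a b = ∑ x : ((↑V : Set (Fin n)) → Fin q),
      if x ⟨u, hu⟩ = a ∧ x ⟨v, hv⟩ = b then D V x else 0 := by
  have hTS : ({u, v} : Finset (Fin n)) ⊆ V := by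
    intro w hw
    simp only [Finset.mem_insert, Finset.mem_singleton] at hw
    rcases hw with rfl | rfl <;> assumption
  have h1 : ∀ β, D {u, v} β = ∑ x : ((↑V : Set (Fin n)) → Fin q),
      if ∀ i : (↑({u,v} : Finset (Fin n)) : Set (Fin n)),
        x (Set.inclusion (Finset.coe_subset.mpr hTS) i) = β i then D V x else 0 :=
    hD V {u, v} hTS hV
  rw [pairProb]
  simp_rw [h1]
  have h2 : ∀ (P : Prop) [Decidable P] (f : ((↑V : Set (Fin n)) → Fin q) → ℝ),
      (if P then (∑ x, f x) else 0) = ∑ x : ((↑V : Set (Fin n)) → Fin q), if P then f x else 0 := by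
    intro P _ f; split <;> simp
  rw [Finset.sum_congr rfl (fun β _ => h2 _ _)]
  rw [Finset.sum_comm]
  apply Finset.sum_congr rfl
  intro x _
  have hres : ∀ β : ((↑({u,v} : Finset (Fin n)) : Set (Fin n)) → Fin q),
      (∀ i : (↑({u,v} : Finset (Fin n)) : Set (Fin n)),
        x (Set.inclusion (Finset.coe_subset.mpr hTS) i) = β i)
      ↔ β = fun i => x (Set.inclusion (Finset.coe_subset.mpr hTS) i) := by
    intro β
    constructor
    · intro h; funext i; exact (h i).symm
    · intro h i; rw [h]
  calc (∑ β : ((↑({u,v} : Finset (Fin n)) : Set (Fin n)) → Fin q),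
        if β ⟨u, Finset.mem_insert_self u {v}⟩ = a ∧
           β ⟨v, Finset.mem_insert_of_mem (Finset.mem_singleton_self v)⟩ = b
        then (if (∀ i, x (Set.inclusion (Finset.coe_subset.mpr hTS) i) = β i) then D V x else 0) else 0)
      = ∑ β : ((↑({u,v} : Finset (Fin n)) : Set (Fin n)) → Fin q),
        if β = (fun i => x (Set.inclusion (Finset.coe_subset.mpr hTS) i)) then
          (if β ⟨u, Finset.mem_insert_self u {v}⟩ = a ∧
              β ⟨v, Finset.mem_insert_of_mem (Finset.mem_singleton_self v)⟩ = b
           then D V x else 0) else 0 := by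
        apply Finset.sum_congr rfl
        intro β _
        simp only [hres β]
        by_cases h1' : β = (fun i => x (Set.inclusion (Finset.coe_subset.mpr hTS) i)) <;>
          by_cases h2' : (β ⟨u, Finset.mem_insert_self u {v}⟩ = a ∧
            β ⟨v, Finset.mem_insert_of_mem (Finset.mem_singleton_self v)⟩ = b) <;>
          simp [h1', h2']
    _ = if x ⟨u, hu⟩ = a ∧ x ⟨v, hv⟩ = b then D V x else 0 := by
        rw [Finset.sum_ite_eq' Finset.univ]
        simp only [Finset.mem_univ, if_true]

/-- Covariance entry formula over a common superset. -/
lemma cov_formula (hD : LocallyConsistent n q r D)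
    {V : Finset (Fin n)} (hV : V.card ≤ r) {u v : Fin n} (hu : u ∈ V) (hv : v ∈ V) (a b : Fin q) :
    covMatrix D (u, a) (v, b)
      = (∑ x : ((↑V : Set (Fin n)) → Fin q), if x ⟨u, hu⟩ = a ∧ x ⟨v, hv⟩ = b then D V x else 0)
        - (∑ x : ((↑V : Set (Fin n)) → Fin q), if x ⟨u, hu⟩ = a then D V x else 0)
          * (∑ x : ((↑V : Set (Fin n)) → Fin q), if x ⟨v, hv⟩ = b then D V x else 0) := by
  show pairProb D u v a b - singleProb D u a * singleProb D v b = _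
  rw [marg_pair D hD hV hu hv, marg_single D hD hV hu, marg_single D hD hV hv]

/-- Covariance entries vanish across components. -/
lemma cov_zero {u v : Fin n} (h : ¬ (corrGraph D).Reachable u v) (a b : Fin q) :
    covMatrix D (u, a) (v, b) = 0 := by
  by_contra hne
  apply h
  have hneq : u ≠ v := by rintro rfl; exact h (SimpleGraph.Reachable.refl _)
  exact SimpleGraph.Adj.reachable
    ((SimpleGraph.fromRel_adj _ u v).mpr ⟨hneq, Or.inl ⟨a, b, hne⟩⟩)

/-- The component of `u` as a finset. -/
noncomputable def comp (u : Fin n) : Finset (Fin n) :=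
  Finset.univ.filter (fun v => (corrGraph D).Reachable u v)

lemma mem_comp {u v : Fin n} : v ∈ comp D u ↔ (corrGraph D).Reachable u v := by
  simp [comp]

lemma comp_card (u : Fin n) :
    (comp D u).card = ({v | (corrGraph D).Reachable u v} : Set (Fin n)).ncard := by
  rw [← Set.ncard_coe_finset]
  congr 1
  ext w
  simp [comp]

lemma comp_eq_of_mem {u w : Fin n} (h : w ∈ comp D u) : comp D w = comp D u := by
  rw [mem_comp] at h
  ext z
  rw [mem_comp, mem_comp]
  exact ⟨fun hz => h.trans hz, fun hz => h.symm.trans hz⟩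


/-- Per-component nonnegativity of the quadratic form. -/
lemma comp_nonneg (hD : LocallyConsistent n q r D) {V : Finset (Fin n)} (hV : V.card ≤ r)
    (hnn : ∀ x, 0 ≤ D V x) (hsum : ∑ x, D V x = 1) (y : Fin n × Fin q → ℝ) :
    0 ≤ ∑ u ∈ V, ∑ v ∈ V, ∑ a : Fin q, ∑ b : Fin q,
        y (u, a) * (covMatrix D (u, a) (v, b) * y (v, b)) := by
  classical
  set Y : {w // w ∈ V} → ((↑V : Set (Fin n)) → Fin q) → ℝ :=
    fun i x => y (i.1, x ⟨i.1, i.2⟩) with hYdef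
  set G : ((↑V : Set (Fin n)) → Fin q) → ℝ := fun x => ∑ i ∈ V.attach, Y i x with hGdef
  have hB : ∀ (w : {w // w ∈ V}),
      (∑ a : Fin q, y (w.1, a) * ∑ x : ((↑V : Set (Fin n)) → Fin q),
        if x ⟨w.1, w.2⟩ = a then D V x else 0)
      = ∑ x : ((↑V : Set (Fin n)) → Fin q), D V x * Y w x := by
    intro w
    simp_rw [Finset.mul_sum]
    rw [Finset.sum_comm]
    apply Finset.sum_congr rfl; intro x _
    simp [mul_ite, Finset.sum_ite_eq, hYdef]
    ring
  have key : ∀ i j : {w // w ∈ V},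
      (∑ a : Fin q, ∑ b : Fin q, y (i.1, a) * (covMatrix D (i.1, a) (j.1, b) * y (j.1, b)))
      = (∑ x : ((↑V : Set (Fin n)) → Fin q), D V x * (Y i x * Y j x))
        - (∑ x : ((↑V : Set (Fin n)) → Fin q), D V x * Y i x)
          * (∑ x : ((↑V : Set (Fin n)) → Fin q), D V x * Y j x) := by
    intro i j
    have hc := cov_formula D hD hV i.2 j.2
    simp only [hc]
    simp_rw [sub_mul, mul_sub, Finset.sum_sub_distrib]
    congr 1
    · -- main term
      simp_rw [Finset.sum_mul, Finset.mul_sum]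
      rw [Finset.sum_congr rfl (fun a _ => Finset.sum_comm), Finset.sum_comm]
      apply Finset.sum_congr rfl; intro x _
      simp [ite_and, mul_ite, ite_mul, Finset.sum_ite_eq, hYdef]
      ring
    · -- product term
      rw [← hB i, ← hB j, Finset.sum_mul_sum]
      apply Finset.sum_congr rfl; intro a _
      apply Finset.sum_congr rfl; intro b _
      ring
  have h1 : (∑ u ∈ V, ∑ v ∈ V, ∑ a : Fin q, ∑ b : Fin q,
        y (u, a) * (covMatrix D (u, a) (v, b) * y (v, b)))
      = ∑ i ∈ V.attach, ∑ j ∈ V.attach, ∑ a : Fin q, ∑ b : Fin q,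
        y (i.1, a) * (covMatrix D (i.1, a) (j.1, b) * y (j.1, b)) := by
    rw [← Finset.sum_attach V (fun u => ∑ v ∈ V, ∑ a : Fin q, ∑ b : Fin q,
      y (u, a) * (covMatrix D (u, a) (v, b) * y (v, b)))]
    apply Finset.sum_congr rfl; intro i _
    rw [← Finset.sum_attach V (fun v => ∑ a : Fin q, ∑ b : Fin q,
      y (i.1, a) * (covMatrix D (i.1, a) (v, b) * y (v, b)))]
  rw [h1, Finset.sum_congr rfl (fun i _ => Finset.sum_congr rfl (fun j _ => key i j))]
  have h2 : (∑ i ∈ V.attach, ∑ j ∈ V.attach,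
        ((∑ x : ((↑V : Set (Fin n)) → Fin q), D V x * (Y i x * Y j x))
          - (∑ x : ((↑V : Set (Fin n)) → Fin q), D V x * Y i x)
            * (∑ x : ((↑V : Set (Fin n)) → Fin q), D V x * Y j x)))
      = (∑ x : ((↑V : Set (Fin n)) → Fin q), D V x * (G x) ^ 2)
        - (∑ x : ((↑V : Set (Fin n)) → Fin q), D V x * G x) ^ 2 := by
    simp_rw [Finset.sum_sub_distrib]
    congr 1
    · rw [Finset.sum_congr rfl (fun i _ => Finset.sum_comm), Finset.sum_comm]
      apply Finset.sum_congr rfl; intro x _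
      rw [hGdef]
      simp only []
      rw [sq, Finset.sum_mul_sum, Finset.mul_sum]
      apply Finset.sum_congr rfl; intro i _
      rw [Finset.mul_sum]
    · rw [← Finset.sum_mul_sum, sq]
      congr 1 <;>
      · rw [Finset.sum_comm]
        apply Finset.sum_congr rfl; intro x _
        rw [hGdef]
        simp only []
        rw [Finset.mul_sum]
  rw [h2, sub_nonneg]
  have cs := Finset.sum_mul_sq_le_sq_mul_sq Finset.univ
    (fun x => Real.sqrt (D V x)) (fun x => Real.sqrt (D V x) * G x)
  have e1 : ∀ x : ((↑V : Set (Fin n)) → Fin q),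
      Real.sqrt (D V x) * (Real.sqrt (D V x) * G x) = D V x * G x := by
    intro x; rw [← mul_assoc, Real.mul_self_sqrt (hnn x)]
  have e2 : ∀ x : ((↑V : Set (Fin n)) → Fin q),
      Real.sqrt (D V x) ^ 2 = D V x := fun x => Real.sq_sqrt (hnn x)
  have e3 : ∀ x : ((↑V : Set (Fin n)) → Fin q),
      (Real.sqrt (D V x) * G x) ^ 2 = D V x * G x ^ 2 := by
    intro x; rw [mul_pow, e2]
  simp_rw [e1, e2, e3, hsum, one_mul] at cs
  exact cs

end Aux

/-- If every connected component of the correlation graph of an `r`-locally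
consistent family of distributions has size at most `r`, then the covariance
matrix is positive semidefinite. -/
theorem stmt_7 {n q r : ℕ} (hr : 2 ≤ r)
    (D : (S : Finset (Fin n)) → ((↑S : Set (Fin n)) → Fin q) → ℝ)
    (hD : LocallyConsistent n q r D)
    (hdist : ∀ S : Finset (Fin n), S.card ≤ r →
      (∀ x, 0 ≤ D S x) ∧ ∑ x, D S x = 1)
    (hcomp : ∀ u : Fin n,
      ({v | (corrGraph D).Reachable u v} : Set (Fin n)).ncard ≤ r) :
    (covMatrix D).PosSemidef := by
  have hcard : ∀ u : Fin n, (comp D u).card ≤ r := fun u => by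
    rw [comp_card]; exact hcomp u
  rw [Matrix.posSemidef_iff_dotProduct_mulVec]
  constructor
  · -- Hermitian
    ext ⟨v, b⟩ ⟨u, a⟩
    show star (covMatrix D (u, a) (v, b)) = covMatrix D (v, b) (u, a)
    rw [RCLike.star_def, RCLike.conj_to_real]
    by_cases h : (corrGraph D).Reachable u v
    · have hu : u ∈ comp D u := (mem_comp D).mpr (SimpleGraph.Reachable.refl _)
      have hv : v ∈ comp D u := (mem_comp D).mpr h
      rw [cov_formula D hD (hcard u) hu hv, cov_formula D hD (hcard u) hv hu]
      simp only [and_comm]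
      ring
    · rw [cov_zero D h, cov_zero D (fun h' => h h'.symm)]
  · -- quadratic form
    intro y
    have hQF : dotProduct (star y) ((covMatrix D).mulVec y)
        = ∑ u : Fin n, ∑ v : Fin n, ∑ a : Fin q, ∑ b : Fin q,
            y (u, a) * (covMatrix D (u, a) (v, b) * y (v, b)) := by
      simp only [dotProduct, Matrix.mulVec, Pi.star_apply,
        star_trivial, Finset.mul_sum]
      rw [Fintype.sum_prod_type]
      apply Finset.sum_congr rfl; intro u _
      simp_rw [Fintype.sum_prod_type]
      rw [Finset.sum_comm]
    rw [hQF]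
    have gzero : ∀ u v : Fin n, ¬ (corrGraph D).Reachable u v →
        (∑ a : Fin q, ∑ b : Fin q, y (u, a) * (covMatrix D (u, a) (v, b) * y (v, b))) = 0 := by
      intro u v h
      apply Finset.sum_eq_zero; intro a _
      apply Finset.sum_eq_zero; intro b _
      rw [cov_zero D h, zero_mul, mul_zero]
    have step1 : ∀ u : Fin n,
        (∑ v : Fin n, ∑ a : Fin q, ∑ b : Fin q,
          y (u, a) * (covMatrix D (u, a) (v, b) * y (v, b)))
        = ∑ v ∈ comp D u, ∑ a : Fin q, ∑ b : Fin q,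
          y (u, a) * (covMatrix D (u, a) (v, b) * y (v, b)) := by
      intro u
      symm
      apply Finset.sum_subset (Finset.subset_univ _)
      intro v _ hv
      exact gzero u v (fun h => hv ((mem_comp D).mpr h))
    rw [Finset.sum_congr rfl (fun u _ => step1 u)]
    rw [← Finset.sum_fiberwise Finset.univ (comp D)
      (fun u => ∑ v ∈ comp D u, ∑ a : Fin q, ∑ b : Fin q,
        y (u, a) * (covMatrix D (u, a) (v, b) * y (v, b)))]
    apply Finset.sum_nonneg
    intro V _
    rcases Finset.eq_empty_or_nonempty (Finset.univ.filter (fun u => comp D u = V)) with he | hne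
    · rw [he, Finset.sum_empty]
    · obtain ⟨u0, hu0⟩ := hne
      have hu0' : comp D u0 = V := (Finset.mem_filter.mp hu0).2
      have hfilter : Finset.univ.filter (fun u => comp D u = V) = V := by
        ext w
        simp only [Finset.mem_filter, Finset.mem_univ, true_and]
        constructor
        · intro h
          rw [← h]
          exact (mem_comp D).mpr (SimpleGraph.Reachable.refl _)
        · intro hw
          rw [← hu0'] at hw
          rw [comp_eq_of_mem D hw, hu0']
      rw [hfilter]
      have hVcard : V.card ≤ r := hu0' ▸ hcard u0
      have hrw : ∀ u ∈ V, (∑ v ∈ comp D u, ∑ a : Fin q, ∑ b : Fin q,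
          y (u, a) * (covMatrix D (u, a) (v, b) * y (v, b)))
          = ∑ v ∈ V, ∑ a : Fin q, ∑ b : Fin q,
          y (u, a) * (covMatrix D (u, a) (v, b) * y (v, b)) := by
        intro u hu
        rw [comp_eq_of_mem D (hu0' ▸ hu : u ∈ comp D u0), hu0']
      rw [Finset.sum_congr rfl hrw]
      exact comp_nonneg D hD hVcard (hdist V hVcard).1 (hdist V hVcard).2 y
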